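/- Let λ>0, ρ(x)=λ^{-1}·exp(-x/λ) for x≥0, and for a>2 set ν_a(t)=-λ·a·ln(1-t) on [0,1). Then for every f∈F_{1,∞}(ℝ_+), the function g_{f,ν_a}(t)=f(ν_a(t))ρ(ν_a(t))ν_a'(t) satisfies g_{f,ν_a}(0)=0 and ess sup_{t∈(0,1)} |g_{f,ν_a}'(t)| ≤ a²·λ·(1 + (a-1)/((a-2)·e))·‖f'‖_{L_∞(0,∞)}. Moreover, the function a ↦ a²·(1 + (a-1)/((a-2)·e)) on (2,∞) attains its minimum at a* = 2 + 4/(√(17+16e)+1). -/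

import Mathlib

open MeasureTheory Set ENNReal

private lemma aux_rpow_log {q c : ℝ} (hq0 : 0 < q) (hq1 : q < 1) (hc : 0 < c) :
    q ^ c * (-Real.log q) ≤ 1 / (c * Real.exp 1) := by
  have hlog : Real.log q < 0 := Real.log_neg hq0 hq1
  set v : ℝ := -Real.log q with hv
  have hv0 : 0 < v := by simp [hv]; linarith
  have hq : q ^ c = Real.exp (-(c * v)) := by
    rw [Real.rpow_def_of_pos hq0]
    congr 1
    rw [hv]; ring
  have key : (c * v) * Real.exp (-(c * v)) ≤ Real.exp (-1) := by
    have h1 : c * v ≤ Real.exp (c * v - 1) := by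
      have := Real.add_one_le_exp (c * v - 1)
      linarith
    have h2 : (c * v) * Real.exp (-(c * v)) ≤ Real.exp (c * v - 1) * Real.exp (-(c * v)) :=
      mul_le_mul_of_nonneg_right h1 (Real.exp_pos _).le
    calc (c * v) * Real.exp (-(c * v)) ≤ Real.exp (c * v - 1) * Real.exp (-(c * v)) := h2
      _ = Real.exp (-1) := by rw [← Real.exp_add]; ring_nf
  have hrw : q ^ c * v = ((c * v) * Real.exp (-(c * v))) / c := by
    rw [hq]; field_simp
  rw [hrw]
  rw [div_le_div_iff₀ hc (by positivity)]
  have : Real.exp (-1) * (c * Real.exp 1) = c := by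
    rw [Real.exp_neg]; field_simp
  nlinarith [mul_le_mul_of_nonneg_right key (by positivity : (0:ℝ) ≤ c * Real.exp 1)]

private lemma fubini_parts {w P P' : ℝ → ℝ} {t C : ℝ} (ht : 0 < t)
    (hwm : AEStronglyMeasurable w (volume.restrict (Ioc (0:ℝ) t)))
    (hwb : ∀ᵐ r ∂(volume.restrict (Ioc (0:ℝ) t)), |w r| ≤ C)
    (hP : ∀ s, HasDerivAt P (P' s) s) (hP'c : Continuous P') :
    ∫ s in Ioc (0:ℝ) t, P' s * (∫ r in Ioc (0:ℝ) s, w r) =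
      ∫ r in Ioc (0:ℝ) t, w r * (P t - P r) := by
  set μt := volume.restrict (Ioc (0:ℝ) t) with hμt
  haveI : IsFiniteMeasure μt := by
    constructor
    rw [hμt, Measure.restrict_apply_univ]
    exact measure_Ioc_lt_top
  obtain ⟨D, hD⟩ : ∃ D, ∀ x ∈ Icc (0:ℝ) t, ‖P' x‖ ≤ D :=
    isCompact_Icc.exists_bound_of_continuousOn hP'c.continuousOn
  have hD0 : 0 ≤ D := le_trans (norm_nonneg (P' 0)) (hD 0 ⟨le_refl _, ht.le⟩)
  set H : ℝ × ℝ → ℝ := fun q => if q.2 < q.1 then P' q.1 * w q.2 else 0 with hH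
  have hHm : AEStronglyMeasurable H (μt.prod μt) := by
    have h1 : AEStronglyMeasurable (fun q : ℝ × ℝ => P' q.1 * w q.2) (μt.prod μt) :=
      ((hP'c.comp continuous_fst).aestronglyMeasurable).mul hwm.comp_snd
    have h2 : MeasurableSet {q : ℝ × ℝ | q.2 < q.1} :=
      measurableSet_lt measurable_snd measurable_fst
    have heq : H = {q : ℝ × ℝ | q.2 < q.1}.indicator (fun q => P' q.1 * w q.2) := by
      ext q; simp [hH, indicator_apply]
    rw [heq]; exact h1.indicator h2
  have hq1 : ∀ᵐ q : ℝ × ℝ ∂(μt.prod μt), q.1 ∈ Ioc (0:ℝ) t := by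
    rw [ae_iff]
    refine measure_mono_null (t := (Ioc (0:ℝ) t)ᶜ ×ˢ (univ : Set ℝ))
      (fun q hq => ⟨hq, mem_univ _⟩) ?_
    rw [Measure.prod_prod]
    have : μt (Ioc (0:ℝ) t)ᶜ = 0 := by
      rw [hμt, Measure.restrict_apply (measurableSet_Ioc.compl)]
      simp
    rw [this, zero_mul]
  have hq2 : ∀ᵐ q : ℝ × ℝ ∂(μt.prod μt), |w q.2| ≤ C := by
    rw [ae_iff]
    set B := {r : ℝ | ¬ |w r| ≤ C} with hB
    have hBnull : μt B = 0 := by rw [← ae_iff] at *; exact hwb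
    refine measure_mono_null (t := (univ : Set ℝ) ×ˢ (toMeasurable μt B))
      (fun q hq => ⟨mem_univ _, subset_toMeasurable _ _ hq⟩) ?_
    rw [Measure.prod_prod, measure_toMeasurable, hBnull, mul_zero]
  have hHi : Integrable H (μt.prod μt) := by
    refine Integrable.mono' (integrable_const (D * max C 0)) hHm ?_
    filter_upwards [hq1, hq2] with q h1 h2
    simp only [hH]
    split_ifs with hlt
    · rw [Real.norm_eq_abs, abs_mul]
      exact mul_le_mul (hD q.1 (Ioc_subset_Icc_self h1)) (le_trans h2 (le_max_left _ _))
        (abs_nonneg _) hD0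
    · simp only [norm_zero]
      positivity
  have hsw : ∫ s, (∫ r, H (s, r) ∂μt) ∂μt = ∫ r, (∫ s, H (s, r) ∂μt) ∂μt :=
    integral_integral_swap hHi
  have step1 : ∀ s ∈ Ioc (0:ℝ) t, (∫ r, H (s, r) ∂μt) = P' s * ∫ r in Ioc (0:ℝ) s, w r := by
    intro s hs
    have he : (fun r => H (s, r)) = (Iio s).indicator (fun r => P' s * w r) := by
      ext r; simp [hH, indicator_apply]
    rw [he, integral_indicator measurableSet_Iio, hμt,
      Measure.restrict_restrict measurableSet_Iio]
    have hset : Iio s ∩ Ioc 0 t = Ioo (0:ℝ) s := by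
      ext r
      simp only [mem_inter_iff, mem_Iio, mem_Ioc, mem_Ioo]
      constructor
      · rintro ⟨h1, h2, h3⟩; exact ⟨h2, h1⟩
      · rintro ⟨h1, h2⟩; exact ⟨h2, h1, le_trans h2.le hs.2⟩
    rw [hset, MeasureTheory.integral_const_mul, integral_Ioc_eq_integral_Ioo]
  have step2 : ∀ r ∈ Ioc (0:ℝ) t, (∫ s, H (s, r) ∂μt) = w r * (P t - P r) := by
    intro r hr
    have he : (fun s => H (s, r)) = (Ioi r).indicator (fun s => P' s * w r) := by
      ext s; simp [hH, indicator_apply]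
    rw [he, integral_indicator measurableSet_Ioi, hμt,
      Measure.restrict_restrict measurableSet_Ioi]
    have hset : Ioi r ∩ Ioc 0 t = Ioc r t := by
      ext x
      simp only [mem_inter_iff, mem_Ioi, mem_Ioc]
      constructor
      · rintro ⟨h1, _, h3⟩; exact ⟨h1, h3⟩
      · rintro ⟨h1, h2⟩; exact ⟨h1, lt_trans hr.1 h1, h2⟩
    have hft : ∫ s in Ioc r t, P' s = P t - P r := by
      rw [← intervalIntegral.integral_of_le hr.2]
      exact intervalIntegral.integral_eq_sub_of_hasDerivAt (fun x _ => hP x)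
        (hP'c.intervalIntegrable r t)
    rw [hset, MeasureTheory.integral_mul_const, hft, mul_comm]
  calc ∫ s in Ioc (0:ℝ) t, P' s * ∫ r in Ioc (0:ℝ) s, w r
      = ∫ s, (∫ r, H (s, r) ∂μt) ∂μt := (setIntegral_congr_fun measurableSet_Ioc step1).symm
    _ = ∫ r, (∫ s, H (s, r) ∂μt) ∂μt := hsw
    _ = ∫ r in Ioc (0:ℝ) t, w r * (P t - P r) := setIntegral_congr_fun measurableSet_Ioc step2

private lemma aux_opt :
    (2 + 4 / (Real.sqrt (17 + 16 * Real.exp 1) + 1)) ∈ Ioi (2:ℝ) ∧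
      ∀ b ∈ Ioi (2:ℝ),
      (2 + 4 / (Real.sqrt (17 + 16 * Real.exp 1) + 1)) ^ 2 *
          (1 + ((2 + 4 / (Real.sqrt (17 + 16 * Real.exp 1) + 1)) - 1) /
            (((2 + 4 / (Real.sqrt (17 + 16 * Real.exp 1) + 1)) - 2) * Real.exp 1)) ≤
        b ^ 2 * (1 + (b - 1) / ((b - 2) * Real.exp 1)) := by
  have hE : 0 < Real.exp 1 := Real.exp_pos 1
  have hs0 : (0:ℝ) < 17 + 16 * Real.exp 1 := by positivity
  set s : ℝ := Real.sqrt (17 + 16 * Real.exp 1) with hs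
  have hs2 : s ^ 2 = 17 + 16 * Real.exp 1 := Real.sq_sqrt hs0.le
  have hsp : 0 < s := Real.sqrt_pos.mpr hs0
  have hs1 : s + 1 ≠ 0 := by positivity
  set c : ℝ := 4 / (s + 1) with hc
  have hcpos : 0 < c := by positivity
  have hR : (2 * Real.exp 1 + 2) * c ^ 2 + c - 2 = 0 := by
    rw [hc]
    field_simp
    nlinarith [hs2, hsp]
  constructor
  · have : 0 < c := hcpos
    simp only [mem_Ioi]
    linarith
  · intro b hb
    simp only [mem_Ioi] at hb
    have hd : 0 < b - 2 := by linarith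
    have key : 0 ≤ (b - 2 - c) ^ 2 * c *
        ((Real.exp 1 + 1) * ((b - 2) + 2 * c) + 4 * Real.exp 1 + 5) := by
      apply mul_nonneg (mul_nonneg (sq_nonneg _) hcpos.le)
      nlinarith [hE, hd, hcpos]
    have expand : b ^ 2 * (1 + (b - 1) / ((b - 2) * Real.exp 1)) -
        (2 + c) ^ 2 * (1 + ((2 + c) - 1) / (((2 + c) - 2) * Real.exp 1)) =
        ((b - 2 - c) ^ 2 * c * ((Real.exp 1 + 1) * ((b - 2) + 2 * c) + 4 * Real.exp 1 + 5)
          + (b - 2 - c) * (c + 2) * ((2 * Real.exp 1 + 2) * c ^ 2 + c - 2)) /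
          (c * (b - 2) * Real.exp 1) := by
      have h1 : c ≠ 0 := ne_of_gt hcpos
      have h2 : b - 2 ≠ 0 := ne_of_gt hd
      have h3 : Real.exp 1 ≠ 0 := ne_of_gt hE
      rw [show (2 + c) - 2 = c by ring]
      field_simp
      ring
    rw [hR, mul_zero, add_zero] at expand
    have hpos : 0 ≤ ((b - 2 - c) ^ 2 * c *
        ((Real.exp 1 + 1) * ((b - 2) + 2 * c) + 4 * Real.exp 1 + 5)) /
        (c * (b - 2) * Real.exp 1) := by
      apply div_nonneg key
      positivity
    linarith [expand, hpos]

set_option maxHeartbeats 2000000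

/-- Let `λ > 0`, `ρ(x) = λ⁻¹ e^{-x/λ}`, and for `a > 2` let
`ν_a(t) = -λ a ln(1-t)` on `[0,1)`.  For every `f ∈ F_{1,∞}(ℝ₊)` the function
`g_{f,ν_a}(t) = f(ν_a(t)) ρ(ν_a(t)) ν_a'(t)` satisfies `g(0) = 0` and (as an element of
`W_{1,∞}`, via its weak derivative `g'`)
`ess sup_{t∈(0,1)} |g'(t)| ≤ a² λ (1 + (a-1)/((a-2)e)) ‖f'‖_{L_∞(0,∞)}`.
Moreover, `a ↦ a² (1 + (a-1)/((a-2)e))` attains its minimum on `(2,∞)` at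
`a* = 2 + 4/(√(17+16e)+1)`. -/
theorem exponential_density_W1infty_bound_and_optimal_a
    (lam : ℝ) (hlam : 0 < lam)
    (ρ : ℝ → ℝ) (hρ : ∀ x, ρ x = lam⁻¹ * Real.exp (-x / lam))
    (a : ℝ) (ha : 2 < a)
    (ν ν' : ℝ → ℝ)
    (hν : ∀ t, ν t = -(lam * a) * Real.log (1 - t))
    (hν' : ∀ t, ν' t = lam * a / (1 - t))
    (f f' : ℝ → ℝ)
    (hf0 : f 0 = 0)
    (hf_int : ∀ x, 0 < x → IntervalIntegrable f' volume 0 x)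
    (hf_repr : ∀ x, 0 ≤ x → f x = ∫ s in (0:ℝ)..x, f' s)
    (hf'Linf : MemLp f' ⊤ (volume.restrict (Ioi 0)))
    (g : ℝ → ℝ) (hg : ∀ t, g t = f (ν t) * ρ (ν t) * ν' t) :
    (g 0 = 0 ∧
      ∃ g' : ℝ → ℝ,
        (∀ t ∈ Ico (0:ℝ) 1, IntervalIntegrable g' volume 0 t ∧
          g t = ∫ s in (0:ℝ)..t, g' s) ∧
        eLpNorm g' ⊤ (volume.restrict (Ioo (0:ℝ) 1)) ≤
          ENNReal.ofReal (a ^ 2 * lam * (1 + (a - 1) / ((a - 2) * Real.exp 1))) *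
            eLpNorm f' ⊤ (volume.restrict (Ioi 0))) ∧
    ((2 + 4 / (Real.sqrt (17 + 16 * Real.exp 1) + 1)) ∈ Ioi (2:ℝ) ∧
      ∀ b ∈ Ioi (2:ℝ),
      (2 + 4 / (Real.sqrt (17 + 16 * Real.exp 1) + 1)) ^ 2 *
          (1 + ((2 + 4 / (Real.sqrt (17 + 16 * Real.exp 1) + 1)) - 1) /
            (((2 + 4 / (Real.sqrt (17 + 16 * Real.exp 1) + 1)) - 2) * Real.exp 1)) ≤
        b ^ 2 * (1 + (b - 1) / ((b - 2) * Real.exp 1))) := by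
  have ha0 : (0:ℝ) < a := by linarith
  have ha1 : (1:ℝ) ≤ a - 1 := by linarith
  have hla : 0 < lam * a := by positivity
  have hν00 : ν 0 = 0 := by rw [hν 0]; norm_num
  have hg0 : g 0 = 0 := by rw [hg 0, hν00, hf0, zero_mul, zero_mul]
  refine ⟨⟨hg0, ?_⟩, aux_opt⟩
  -- derivative facts for ν
  have hνfun : ν = fun u : ℝ => -(lam * a) * Real.log (1 - u) := funext hν
  have hνd : ∀ x : ℝ, x < 1 → HasDerivAt ν (lam * a / (1 - x)) x := by
    intro x hx
    have h0 : (1:ℝ) - x ≠ 0 := by intro h; linarith [h]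
    have h1 : HasDerivAt (fun u : ℝ => 1 - u) (-1) x := by
      exact (hasDerivAt_id' x).const_sub 1
    have h2 : HasDerivAt (fun u : ℝ => Real.log (1 - u)) ((1 - x)⁻¹ * (-1)) x :=
      (Real.hasDerivAt_log h0).comp x h1
    have h3 := h2.const_mul (-(lam * a))
    rw [hνfun]
    refine h3.congr_deriv ?_
    ring
  have hν_pos : ∀ s : ℝ, 0 < s → s < 1 → 0 < ν s := by
    intro s h0 h1
    rw [hν s]
    have hlog : Real.log (1 - s) < 0 := Real.log_neg (by linarith) (by linarith)
    nlinarith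
  have hν_mono : ∀ {x y : ℝ}, x < y → y < 1 → ν x < ν y := by
    intro x y hxy hy1
    rw [hν x, hν y]
    have hlog : Real.log (1 - y) < Real.log (1 - x) := Real.log_lt_log (by linarith) (by linarith)
    nlinarith
  -- constants
  set M : ℝ := (eLpNorm f' ⊤ (volume.restrict (Ioi (0:ℝ)))).toReal with hMdef
  have hM0 : 0 ≤ M := ENNReal.toReal_nonneg
  have hMfin : eLpNorm f' ⊤ (volume.restrict (Ioi (0:ℝ))) ≠ ⊤ := hf'Linf.2.ne
  have hMa : ∀ᵐ x ∂(volume.restrict (Ioi (0:ℝ))), |f' x| ≤ M := by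
    have h := ae_le_eLpNormEssSup (f := f') (μ := volume.restrict (Ioi (0:ℝ)))
    filter_upwards [h] with x hx
    have h2 : ((‖f' x‖₊ : ℝ≥0∞)).toReal ≤ (eLpNormEssSup f' (volume.restrict (Ioi (0:ℝ)))).toReal := by
      apply ENNReal.toReal_mono _ hx
      rw [← eLpNorm_exponent_top]
      exact hMfin
    rw [ENNReal.coe_toReal, coe_nnnorm, Real.norm_eq_abs] at h2
    rw [hMdef, eLpNorm_exponent_top]
    exact h2
  -- F and its bound
  set F : ℝ → ℝ := fun x => ∫ r in Ioc (0:ℝ) x, f' r with hFdef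
  have hFb : ∀ x : ℝ, 0 ≤ x → |F x| ≤ M * x := by
    intro x hx
    have hb : ∀ᵐ r ∂(volume.restrict (Ioc (0:ℝ) x)), ‖f' r‖ ≤ M := by
      filter_upwards [hMa.filter_mono (ae_mono (Measure.restrict_mono Ioc_subset_Ioi_self le_rfl))] with r hr
      rwa [Real.norm_eq_abs]
    have h := norm_setIntegral_le_of_norm_le_const_ae (μ := volume) (f := f')
      (s := Ioc (0:ℝ) x) measure_Ioc_lt_top hb
    rw [Real.volume_real_Ioc_of_le hx, sub_zero] at h
    simpa [hFdef, Real.norm_eq_abs] using h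
  have hfeq : ∀ y : ℝ, 0 ≤ y → f y = F y := by
    intro y hy
    rw [hf_repr y hy, intervalIntegral.integral_of_le hy]
  -- the pullback of null sets along ν
  set σ : ℝ → ℝ := fun x => 1 - Real.exp (-x / (lam * a)) with hσdef
  have hσd : ∀ x : ℝ, HasDerivAt σ (Real.exp (-x / (lam * a)) * (lam * a)⁻¹) x := by
    intro x
    have h1 : HasDerivAt (fun x : ℝ => -x / (lam * a)) (-(lam * a)⁻¹) x := by
      simpa [neg_div] using ((hasDerivAt_id x).neg.div_const (lam * a))
    have h2 := (Real.hasDerivAt_exp (-x / (lam * a))).comp x h1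
    have h3 := h2.const_sub 1
    rw [hσdef]
    refine h3.congr_deriv ?_
    ring
  have hσlip : LipschitzOnWith ((lam * a)⁻¹).toNNReal σ (Ici 0) := by
    apply (convex_Ici (0:ℝ)).lipschitzOnWith_of_nnnorm_hasDerivWithin_le
      (f' := fun x => Real.exp (-x / (lam * a)) * (lam * a)⁻¹)
      (fun x _ => (hσd x).hasDerivWithinAt)
    intro x hx
    rw [← NNReal.coe_le_coe, coe_nnnorm, Real.coe_toNNReal _ (by positivity)]
    rw [Real.norm_eq_abs, abs_mul, abs_of_pos (Real.exp_pos _), abs_of_pos (by positivity)]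
    have hexp : Real.exp (-x / (lam * a)) ≤ 1 := by
      rw [Real.exp_le_one_iff]
      apply div_nonpos_of_nonpos_of_nonneg
      · simp only [mem_Ici] at hx; linarith
      · positivity
    nlinarith [inv_pos.mpr hla]
  have hσν : ∀ s : ℝ, 0 < s → s < 1 → σ (ν s) = s := by
    intro s h0 h1
    rw [hσdef]
    show 1 - Real.exp (-(ν s) / (lam * a)) = s
    rw [hν s]
    have heq : -(-(lam * a) * Real.log (1 - s)) / (lam * a) = Real.log (1 - s) := by
      field_simp
    rw [heq, Real.exp_log (by linarith)]
    ring
  have hnull : ∀ N : Set ℝ, N ⊆ Ici 0 → volume N = 0 → volume (σ '' N) = 0 := by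
    intro N hN hN0
    have hr : (MeasureTheory.Measure.hausdorffMeasure 1 : Measure ℝ) = volume :=
      MeasureTheory.hausdorffMeasure_real
    have h1 := (hσlip.mono hN).hausdorffMeasure_image_le (d := 1) zero_le_one
    rw [hr, hN0, mul_zero] at h1
    exact le_antisymm h1 (zero_le)
  have hpull : ∀ p : ℝ → Prop, (∀ᵐ x ∂(volume.restrict (Ioi (0:ℝ))), p x) →
      (∀ᵐ r ∂(volume.restrict (Ioo (0:ℝ) 1)), p (ν r)) := by
    intro p hp
    have hp' : ∀ᵐ x ∂(volume : Measure ℝ), x ∈ Ioi (0:ℝ) → p x := ae_imp_of_ae_restrict hp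
    set N := {x : ℝ | ¬ (x ∈ Ioi (0:ℝ) → p x)} with hNdef
    have hN0 : volume N = 0 := ae_iff.mp hp'
    have hNsub : N ⊆ Ici 0 := by
      intro x hx
      simp only [hNdef, mem_setOf_eq, Classical.not_imp] at hx
      exact mem_Ici.mpr (le_of_lt (mem_Ioi.mp hx.1))
    have himg0 : volume (σ '' N) = 0 := hnull N hNsub hN0
    rw [ae_restrict_iff' measurableSet_Ioo]
    have hae := measure_eq_zero_iff_ae_notMem.mp himg0
    filter_upwards [hae] with r hr hrI
    by_contra hc
    apply hr
    exact ⟨ν r, fun himp => hc (himp (hν_pos r hrI.1 hrI.2)), hσν r hrI.1 hrI.2⟩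
  have hMν : ∀ᵐ r ∂(volume.restrict (Ioo (0:ℝ) 1)), |f' (ν r)| ≤ M :=
    hpull (fun x => |f' x| ≤ M) hMa
  -- measurability of f' ∘ ν
  set f₀ : ℝ → ℝ := (hf'Linf.1).mk f' with hf₀def
  have hf₀m : StronglyMeasurable f₀ := hf'Linf.1.stronglyMeasurable_mk
  have hcomp : ∀ᵐ r ∂(volume.restrict (Ioo (0:ℝ) 1)), f' (ν r) = f₀ (ν r) :=
    hpull (fun x => f' x = f₀ x) hf'Linf.1.ae_eq_mk
  have hν_meas : Measurable ν := by
    rw [hνfun]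
    exact (Real.measurable_log.comp (measurable_const.sub measurable_id)).const_mul _
  -- the functions w, P, P', g'
  set w : ℝ → ℝ := fun r => f' (ν r) * (lam * a / (1 - r)) with hwdef
  set P : ℝ → ℝ := fun s => a * (1 - s) ^ (a - 1) with hPdef
  set P' : ℝ → ℝ := fun s => -(a * (a - 1) * (1 - s) ^ (a - 2)) with hP'def
  set g' : ℝ → ℝ := fun s => P s * w s + P' s * (∫ r in Ioc (0:ℝ) s, w r) with hg'def
  have hwm1 : AEStronglyMeasurable w (volume.restrict (Ioo (0:ℝ) 1)) := by
    refine AEStronglyMeasurable.mul ⟨fun r => f₀ (ν r), hf₀m.comp_measurable hν_meas, hcomp⟩ ?_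
    exact ((measurable_const.div (measurable_const.sub measurable_id)).aestronglyMeasurable)
  have hwb1 : ∀ᵐ r ∂(volume.restrict (Ioo (0:ℝ) 1)), |w r| ≤ M * (lam * a / (1 - r)) := by
    filter_upwards [hMν, ae_restrict_mem measurableSet_Ioo] with r h1 h2
    have hq : 0 < 1 - r := by linarith [h2.2]
    rw [hwdef]
    simp only
    rw [abs_mul, abs_of_pos (by positivity : (0:ℝ) < lam * a / (1 - r))]
    exact mul_le_mul_of_nonneg_right h1 (by positivity)
  -- derivative and continuity of P
  have hPd : ∀ s : ℝ, HasDerivAt P (P' s) s := by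
    intro s
    have h1 : HasDerivAt (fun u : ℝ => 1 - u) (-1) s := by
      exact (hasDerivAt_id' s).const_sub 1
    have h2 := h1.rpow_const (p := a - 1) (Or.inr ha1)
    have h3 := h2.const_mul a
    rw [hPdef, hP'def]
    simp only
    refine h3.congr_deriv ?_
    rw [show a - 1 - 1 = a - 2 by ring]
    ring
  have hP'c : Continuous P' := by
    have hc : Continuous (fun s : ℝ => (1 - s) ^ (a - 2)) := by
      rw [continuous_iff_continuousAt]
      intro x
      exact (Real.continuousAt_rpow_const (1 - x) (a - 2) (Or.inr (by linarith))).comp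
        ((continuous_const.sub continuous_id).continuousAt)
    rw [hP'def]
    exact (continuous_const.mul hc).neg
  have hPc : Continuous P := by
    have hc : Continuous (fun s : ℝ => (1 - s) ^ (a - 1)) := by
      rw [continuous_iff_continuousAt]
      intro x
      exact (Real.continuousAt_rpow_const (1 - x) (a - 1) (Or.inr (by linarith))).comp
        ((continuous_const.sub continuous_id).continuousAt)
    rw [hPdef]
    exact continuous_const.mul hc
  have hP_bound : ∀ s : ℝ, 0 ≤ s → s ≤ 1 → |P s| ≤ a := by
    intro s h0 h1
    rw [hPdef]
    simp only
    rw [abs_mul, abs_of_pos ha0, abs_of_nonneg (Real.rpow_nonneg (by linarith) _)]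
    have := Real.rpow_le_one (by linarith : (0:ℝ) ≤ 1 - s) (by linarith : 1 - s ≤ 1)
      (by linarith : (0:ℝ) ≤ a - 1)
    nlinarith
  have hP'_bound : ∀ s : ℝ, 0 ≤ s → s ≤ 1 → |P' s| ≤ a * (a - 1) := by
    intro s h0 h1
    rw [hP'def]
    simp only
    rw [abs_neg, abs_mul, abs_of_pos (by nlinarith : (0:ℝ) < a * (a - 1)),
      abs_of_nonneg (Real.rpow_nonneg (by linarith) _)]
    have := Real.rpow_le_one (by linarith : (0:ℝ) ≤ 1 - s) (by linarith : 1 - s ≤ 1)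
      (by linarith : (0:ℝ) ≤ a - 2)
    nlinarith [mul_le_mul_of_nonneg_left this (by nlinarith : (0:ℝ) ≤ a * (a - 1))]
  -- change of variables
  have hchg : ∀ s : ℝ, 0 < s → s < 1 → (∫ r in Ioc (0:ℝ) s, w r) = F (ν s) := by
    intro s hs0 hs1
    have himg : ν '' Ioo 0 s = Ioo 0 (ν s) := by
      apply Subset.antisymm
      · rintro x ⟨r, hr, rfl⟩
        exact ⟨hν00 ▸ hν_mono hr.1 (lt_trans hr.2 hs1), hν_mono hr.2 hs1⟩
      · have hcont : ContinuousOn ν (Icc 0 s) := by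
          intro x hx
          exact ((hνd x (lt_of_le_of_lt hx.2 hs1)).continuousAt).continuousWithinAt
        have h := intermediate_value_Ioo (le_of_lt hs0) hcont
        rwa [hν00] at h
    have hinj : InjOn ν (Ioo 0 s) := by
      intro x hx y hy hxy
      by_contra hne
      rcases lt_or_gt_of_ne hne with h | h
      · exact absurd hxy (ne_of_lt (hν_mono h (hy.2.trans hs1)))
      · exact absurd hxy.symm (ne_of_lt (hν_mono h (hx.2.trans hs1)))
    have hder : ∀ x ∈ Ioo (0:ℝ) s, HasDerivWithinAt ν (lam * a / (1 - x)) (Ioo 0 s) x :=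
      fun x hx => (hνd x (hx.2.trans hs1)).hasDerivWithinAt
    calc ∫ r in Ioc (0:ℝ) s, w r = ∫ r in Ioo (0:ℝ) s, w r := integral_Ioc_eq_integral_Ioo
      _ = ∫ r in Ioo (0:ℝ) s, |lam * a / (1 - r)| • f' (ν r) := by
          apply setIntegral_congr_fun measurableSet_Ioo
          intro r hr
          have hq : 0 < 1 - r := by linarith [hr.2, hs1]
          rw [hwdef]
          simp only [smul_eq_mul]
          rw [abs_of_pos (by positivity)]
          ring
      _ = ∫ x in ν '' Ioo (0:ℝ) s, f' x :=
          (integral_image_eq_integral_abs_deriv_smul measurableSet_Ioo hder hinj f').symm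
      _ = ∫ x in Ioo (0:ℝ) (ν s), f' x := by rw [himg]
      _ = F (ν s) := by rw [hFdef]; exact integral_Ioc_eq_integral_Ioo.symm
  -- g as P * u
  have hgPu : ∀ s : ℝ, 0 < s → s < 1 → g s = P s * (∫ r in Ioc (0:ℝ) s, w r) := by
    intro s h0 h1
    have hq : 0 < 1 - s := by linarith
    rw [hg s, hρ (ν s), hν' s, hfeq (ν s) (hν_pos s h0 h1).le, hchg s h0 h1]
    have hexp : Real.exp (-(ν s) / lam) = (1 - s) ^ a := by
      rw [hν s]
      have heq2 : -(-(lam * a) * Real.log (1 - s)) / lam = Real.log (1 - s) * a := by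
        field_simp
      rw [heq2, ← Real.rpow_def_of_pos hq]
    rw [hexp]
    have hsplit : (1 - s) ^ a = (1 - s) ^ (a - 1) * (1 - s) := by
      nth_rewrite 1 [show a = (a - 1) + 1 by ring]
      rw [Real.rpow_add hq, Real.rpow_one]
    rw [hsplit, hPdef]
    simp only
    field_simp
  -- the essential sup bound
  refine ⟨g', ?_, ?_⟩
  · -- representation
    intro t ht
    obtain ⟨ht0, ht1⟩ := ht
    rcases eq_or_lt_of_le ht0 with h0 | h0
    · constructor
      · exact h0 ▸ IntervalIntegrable.refl
      · rw [← h0, intervalIntegral.integral_same]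
        exact hg0
    · -- 0 < t
      set μt := volume.restrict (Ioc (0:ℝ) t) with hμtdef
      have hsub : Ioc (0:ℝ) t ⊆ Ioo (0:ℝ) 1 := fun r hr => ⟨hr.1, lt_of_le_of_lt hr.2 ht1⟩
      have hmle : μt ≤ volume.restrict (Ioo (0:ℝ) 1) := Measure.restrict_mono hsub le_rfl
      have hwm_t : AEStronglyMeasurable w μt := hwm1.mono_measure hmle
      set Cw : ℝ := M * (lam * a / (1 - t)) with hCwdef
      have h1t : 0 < 1 - t := by linarith
      have hCw0 : 0 ≤ Cw := by rw [hCwdef]; positivity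
      have hwb_t : ∀ᵐ r ∂μt, |w r| ≤ Cw := by
        filter_upwards [hwb1.filter_mono (ae_mono hmle), ae_restrict_mem measurableSet_Ioc]
          with r h1 h2
        refine le_trans h1 ?_
        rw [hCwdef]
        have hq : 0 < 1 - r := by linarith [h2.2]
        have hinv : (1 - r)⁻¹ ≤ (1 - t)⁻¹ := by
          apply inv_anti₀ h1t
          linarith [h2.2]
        rw [div_eq_mul_inv, div_eq_mul_inv]
        have := mul_le_mul_of_nonneg_left hinv (le_of_lt hla)
        nlinarith [hM0]
      haveI : IsFiniteMeasure μt := by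
        constructor
        rw [hμtdef, Measure.restrict_apply_univ]
        exact measure_Ioc_lt_top
      have hIw : Integrable w μt := by
        refine Integrable.mono' (integrable_const Cw) hwm_t ?_
        filter_upwards [hwb_t] with r h
        rwa [Real.norm_eq_abs]
      have hIPw : Integrable (fun s => P s * w s) μt := by
        refine Integrable.mono' (integrable_const (a * Cw)) ((hPc.aestronglyMeasurable).mul hwm_t) ?_
        filter_upwards [hwb_t, ae_restrict_mem measurableSet_Ioc] with r hb hm
        rw [Real.norm_eq_abs, abs_mul]
        exact mul_le_mul (hP_bound r hm.1.le (le_trans hm.2 ht1.le)) hb (abs_nonneg _) ha0.le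
      have hucont : ContinuousOn (fun x => ∫ r in Ioc (0:ℝ) x, w r) (Icc 0 t) := by
        apply intervalIntegral.continuousOn_primitive
        rw [integrableOn_Icc_iff_integrableOn_Ioc]
        exact hIw
      have hum : AEStronglyMeasurable (fun x => ∫ r in Ioc (0:ℝ) x, w r) μt :=
        (hucont.mono Ioc_subset_Icc_self).aestronglyMeasurable measurableSet_Ioc
      have hub : ∀ s ∈ Ioc (0:ℝ) t, |∫ r in Ioc (0:ℝ) s, w r| ≤ Cw * t := by
        intro s hs
        have hb : ∀ᵐ r ∂(volume.restrict (Ioc (0:ℝ) s)), ‖w r‖ ≤ Cw := by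
          have hsub2 : Ioc (0:ℝ) s ⊆ Ioc (0:ℝ) t := Ioc_subset_Ioc le_rfl hs.2
          filter_upwards [hwb_t.filter_mono (ae_mono (Measure.restrict_mono hsub2 le_rfl))] with r h
          rwa [Real.norm_eq_abs]
        have h := norm_setIntegral_le_of_norm_le_const_ae (μ := volume) (f := w)
          (s := Ioc (0:ℝ) s) measure_Ioc_lt_top hb
        rw [Real.volume_real_Ioc_of_le hs.1.le, sub_zero, Real.norm_eq_abs] at h
        calc |∫ r in Ioc (0:ℝ) s, w r| ≤ Cw * s := h
          _ ≤ Cw * t := mul_le_mul_of_nonneg_left hs.2 hCw0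
      have hIP'u : Integrable (fun s => P' s * (∫ r in Ioc (0:ℝ) s, w r)) μt := by
        refine Integrable.mono' (integrable_const ((a * (a - 1)) * (Cw * t)))
          ((hP'c.aestronglyMeasurable).mul hum) ?_
        filter_upwards [ae_restrict_mem measurableSet_Ioc] with s hs
        rw [Real.norm_eq_abs, abs_mul]
        exact mul_le_mul (hP'_bound s hs.1.le (le_trans hs.2 ht1.le)) (hub s hs) (abs_nonneg _)
          (by nlinarith)
      have hfub := fubini_parts h0 hwm_t hwb_t hPd hP'c
      have hIwP : Integrable (fun r => w r * P r) μt := by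
        have heq : (fun r => w r * P r) = fun r => P r * w r := funext fun r => mul_comm _ _
        rw [heq]; exact hIPw
      constructor
      · rw [intervalIntegrable_iff_integrableOn_Ioc_of_le ht0]
        have : IntegrableOn g' (Ioc 0 t) volume := by
          rw [hg'def]
          exact hIPw.add hIP'u
        exact this
      · rw [intervalIntegral.integral_of_le ht0]
        have hsplit2 : ∫ s in Ioc (0:ℝ) t, g' s =
            (∫ s in Ioc (0:ℝ) t, P s * w s) +
              ∫ s in Ioc (0:ℝ) t, P' s * (∫ r in Ioc (0:ℝ) s, w r) := by
          rw [hg'def]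
          exact integral_add hIPw hIP'u
        have hrhs : ∫ r in Ioc (0:ℝ) t, w r * (P t - P r) =
            P t * (∫ r in Ioc (0:ℝ) t, w r) - ∫ r in Ioc (0:ℝ) t, w r * P r := by
          have heq : ∀ r, w r * (P t - P r) = P t * w r - w r * P r := fun r => by ring
          simp_rw [heq]
          rw [integral_sub (hIw.const_mul (P t)) hIwP, MeasureTheory.integral_const_mul]
        have hPw_comm : ∫ s in Ioc (0:ℝ) t, P s * w s = ∫ r in Ioc (0:ℝ) t, w r * P r :=
          setIntegral_congr_fun measurableSet_Ioc (fun r _ => mul_comm _ _)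
        rw [hsplit2, hfub, hrhs, hPw_comm, hgPu t h0 ht1]
        ring
  · -- the essSup bound
    have hae_bound : ∀ᵐ s ∂(volume.restrict (Ioo (0:ℝ) 1)),
        ‖g' s‖ ≤ (a ^ 2 * lam * (1 + (a - 1) / ((a - 2) * Real.exp 1))) * M := by
      filter_upwards [hMν, ae_restrict_mem measurableSet_Ioo] with s hfs hs
      obtain ⟨hs0, hs1⟩ := hs
      have hq0 : 0 < 1 - s := by linarith
      have hq1 : 1 - s < 1 := by linarith
      have hX0 : (0:ℝ) ≤ (1 - s) ^ (a - 2) := Real.rpow_nonneg hq0.le _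
      have hX1 : (1 - s) ^ (a - 2) ≤ 1 := Real.rpow_le_one hq0.le hq1.le (by linarith)
      have hXlog : (1 - s) ^ (a - 2) * (-Real.log (1 - s)) ≤ 1 / ((a - 2) * Real.exp 1) :=
        aux_rpow_log hq0 hq1 (by linarith)
      have hq_split : (1 - s) ^ (a - 1) = (1 - s) ^ (a - 2) * (1 - s) := by
        rw [show a - 1 = (a - 2) + 1 by ring, Real.rpow_add hq0, Real.rpow_one]
      have hw_abs : |w s| ≤ M * (lam * a / (1 - s)) := by
        rw [hwdef]
        simp only
        rw [abs_mul, abs_of_pos (by positivity : (0:ℝ) < lam * a / (1 - s))]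
        exact mul_le_mul_of_nonneg_right hfs (by positivity)
      have h1 : |P s * w s| ≤ a ^ 2 * lam * M * ((1 - s) ^ (a - 2)) := by
        rw [abs_mul]
        have hPs : |P s| = a * ((1 - s) ^ (a - 2) * (1 - s)) := by
          rw [hPdef]
          simp only
          rw [abs_of_nonneg (by positivity), hq_split]
        calc |P s| * |w s| ≤ (a * ((1 - s) ^ (a - 2) * (1 - s))) * (M * (lam * a / (1 - s))) := by
              rw [hPs]
              exact mul_le_mul_of_nonneg_left hw_abs (by positivity)
          _ = a ^ 2 * lam * M * ((1 - s) ^ (a - 2)) := by field_simp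
      have hu_abs : |∫ r in Ioc (0:ℝ) s, w r| ≤ M * (lam * a * (-Real.log (1 - s))) := by
        rw [hchg s hs0 hs1]
        calc |F (ν s)| ≤ M * ν s := hFb (ν s) (hν_pos s hs0 hs1).le
          _ = M * (lam * a * (-Real.log (1 - s))) := by rw [hν s]; ring
      have h2 : |P' s * (∫ r in Ioc (0:ℝ) s, w r)| ≤
          a ^ 2 * lam * (a - 1) * M * (1 / ((a - 2) * Real.exp 1)) := by
        rw [abs_mul]
        have hP's : |P' s| = a * (a - 1) * (1 - s) ^ (a - 2) := by
          rw [hP'def]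
          simp only
          rw [abs_neg, abs_of_nonneg (by positivity)]
        calc |P' s| * |∫ r in Ioc (0:ℝ) s, w r| ≤
            (a * (a - 1) * (1 - s) ^ (a - 2)) * (M * (lam * a * (-Real.log (1 - s)))) := by
              rw [hP's]
              exact mul_le_mul_of_nonneg_left hu_abs (by positivity)
          _ = (a ^ 2 * lam * (a - 1) * M) * ((1 - s) ^ (a - 2) * (-Real.log (1 - s))) := by ring
          _ ≤ (a ^ 2 * lam * (a - 1) * M) * (1 / ((a - 2) * Real.exp 1)) := by
              apply mul_le_mul_of_nonneg_left hXlog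
              positivity
      have hCeq : (a ^ 2 * lam * (1 + (a - 1) / ((a - 2) * Real.exp 1))) * M =
          a ^ 2 * lam * M + a ^ 2 * lam * (a - 1) * M * (1 / ((a - 2) * Real.exp 1)) := by
        ring
      have htr : ‖g' s‖ ≤ |P s * w s| + |P' s * (∫ r in Ioc (0:ℝ) s, w r)| := by
        rw [hg'def]
        simp only [Real.norm_eq_abs]
        exact abs_add_le _ _
      have hX1' : a ^ 2 * lam * M * ((1 - s) ^ (a - 2)) ≤ a ^ 2 * lam * M := by
        have h := mul_le_mul_of_nonneg_left hX1 (by positivity : (0:ℝ) ≤ a ^ 2 * lam * M)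
        linarith [h]
      rw [hCeq]
      linarith [htr, h1, h2, hX1']
    have hstep : eLpNorm g' ⊤ (volume.restrict (Ioo (0:ℝ) 1)) ≤
        ENNReal.ofReal ((a ^ 2 * lam * (1 + (a - 1) / ((a - 2) * Real.exp 1))) * M) := by
      rw [eLpNorm_exponent_top]
      exact eLpNormEssSup_le_of_ae_bound hae_bound
    have hC0 : 0 ≤ a ^ 2 * lam * (1 + (a - 1) / ((a - 2) * Real.exp 1)) := by
      have h1 : 0 ≤ (a - 1) / ((a - 2) * Real.exp 1) :=
        div_nonneg (by linarith) (mul_nonneg (by linarith) (Real.exp_pos 1).le)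
      have h2 : (0:ℝ) ≤ a ^ 2 * lam := by positivity
      nlinarith
    calc eLpNorm g' ⊤ (volume.restrict (Ioo (0:ℝ) 1)) ≤
        ENNReal.ofReal ((a ^ 2 * lam * (1 + (a - 1) / ((a - 2) * Real.exp 1))) * M) := hstep
      _ = ENNReal.ofReal (a ^ 2 * lam * (1 + (a - 1) / ((a - 2) * Real.exp 1))) *
            ENNReal.ofReal M := ENNReal.ofReal_mul hC0
      _ ≤ ENNReal.ofReal (a ^ 2 * lam * (1 + (a - 1) / ((a - 2) * Real.exp 1))) *
            eLpNorm f' ⊤ (volume.restrict (Ioi 0)) := by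
          apply mul_le_mul_right
          rw [hMdef]
          exact ENNReal.ofReal_toReal_le
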